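/- arXiv:1304.0580 — 6 statements merged into one kernel-verified Lean document; each statement's English description precedes it below -/
import Mathlib

section
/- Let G be a sub-σ-field of σ(X) with Y ⊥⊥ X | G. Let f : Ω → ℝ be a σ(X)-measurable function in L²(μ) with ∫ f dμ = 0, and suppose that ∫ f·h dμ = 0 for every σ(X)-measurable h : Ω → ℝ in L²(μ) with ∫ h dμ = 0 and μ[h|σ(Y)] = 0 μ-a.e. Then f = μ[f|G] μ-a.e.; in particular, f is μ-a.e. equal to a G-measurable function. -/
open MeasureTheory ProbabilityTheory

section AuxRCU

variable {α : Type*} [m0 : MeasurableSpace α] {μ : Measure α} [IsProbabilityMeasure μ]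

omit [IsProbabilityMeasure μ] in
/-- product of two L² functions is integrable -/
private lemma my_L2_mul {u v : α → ℝ} (hu : MemLp u 2 μ) (hv : MemLp v 2 μ) :
    Integrable (fun ω => u ω * v ω) μ := by
  have h := L2.integrable_inner (𝕜 := ℝ) (hu.toLp u) (hv.toLp v)
  refine h.congr ?_
  filter_upwards [hu.coeFn_toLp, hv.coeFn_toLp] with ω h1 h2
  simp [RCLike.inner_apply, h1, h2, mul_comm]

/-- conditional expectation of an L² function is L² -/
private lemma my_memL2_condExp {m : MeasurableSpace α} (hm : m ≤ m0) {f : α → ℝ}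
    (hf : MemLp f 2 μ) : MemLp (μ[f|m]) 2 μ := by
  haveI : SigmaFinite (μ.trim hm) := inferInstance
  have hae : μ[f|m] =ᵐ[μ] (condExpL2 ℝ ℝ hm (hf.toLp f) : α → ℝ) := by
    refine (ae_eq_condExp_of_forall_setIntegral_eq hm (hf.integrable one_le_two)
      (fun s _ hμs => integrableOn_condExpL2_of_measure_ne_top hm hμs.ne _)
      (fun s hs hμs => ?_) (aestronglyMeasurable_condExpL2 hm _)).symm
    have h1 := integral_condExpL2_eq (𝕜 := ℝ) hm (hf.toLp f) hs hμs.ne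
    have h2 : ∫ x in s, (hf.toLp f : α → ℝ) x ∂μ = ∫ x in s, f x ∂μ :=
      integral_congr_ae (ae_restrict_of_ae hf.coeFn_toLp)
    exact h1.trans h2
  exact (Lp.memLp ((condExpL2 ℝ ℝ hm (hf.toLp f)) : α →₂[μ] ℝ)).ae_eq hae.symm

/-- pull-out property in integral form -/
private lemma my_pullout {m : MeasurableSpace α} (hm : m ≤ m0) {c u : α → ℝ}
    (hc : StronglyMeasurable[m] c) (hcu : Integrable (fun ω => c ω * u ω) μ)
    (hu : Integrable u μ) :
    ∫ ω, c ω * u ω ∂μ = ∫ ω, c ω * (μ[u|m]) ω ∂μ := by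
  haveI : SigmaFinite (μ.trim hm) := inferInstance
  have h2 : μ[c * u|m] =ᵐ[μ] fun ω => c ω * (μ[u|m]) ω :=
    condExp_mul_of_stronglyMeasurable_left hc hcu hu
  calc ∫ ω, c ω * u ω ∂μ = ∫ ω, (μ[c * u|m]) ω ∂μ := (integral_condExp hm).symm
    _ = ∫ ω, c ω * (μ[u|m]) ω ∂μ := integral_congr_ae h2

omit [IsProbabilityMeasure μ] in
private lemma my_setint {S : Set α} (hS : MeasurableSet[m0] S) (g : α → ℝ) :
    ∫ x in S, g x ∂μ = ∫ ω, g ω * S.indicator (fun _ => (1:ℝ)) ω ∂μ := by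
  rw [← integral_indicator hS]
  congr 1
  funext ω
  by_cases h : ω ∈ S <;> simp [h]

end AuxRCU

/-- `Y ⊥⊥ X | G` : conditional independence of `Y` and `X` given a sub-σ-field `G`,
as defined in the paper: for all `A ∈ σ(X)` and `B ∈ σ(Y)`,
`μ[1_{A∩B}|G] = μ[1_A|G] ⬝ μ[1_B|G]` a.e.  The ambient σ-field `mΩ` is explicit. -/
def CondIndepSigma {Ω : Type*} (mΩ : MeasurableSpace Ω) (μ : Measure Ω)
    (mX mY G : MeasurableSpace Ω) : Prop :=
  ∀ A : Set Ω, MeasurableSet[mX] A → ∀ B : Set Ω, MeasurableSet[mY] B →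
    condExp G (m₀ := mΩ) μ ((A ∩ B).indicator (fun _ => (1 : ℝ))) =ᵐ[μ]
      fun ω => (condExp G (m₀ := mΩ) μ (A.indicator (fun _ => (1 : ℝ)))) ω *
        (condExp G (m₀ := mΩ) μ (B.indicator (fun _ => (1 : ℝ)))) ω
/-- Unbiasedness (Theorem 2): if `Y ⊥⊥ X | G` and the centered square-integrable
`σ(X)`-measurable function `f` is orthogonal to every centered square-integrable
`σ(X)`-measurable `h` with `E[h|σ(Y)] = 0`, then `f = E[f|G]` a.e.; in particular
`f` is a.e. equal to a `G`-measurable function. -/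
theorem regression_class_unbiased
    {Ω EX EY : Type*} [mΩ : MeasurableSpace Ω] [mEX : MeasurableSpace EX]
    [mEY : MeasurableSpace EY]
    (μ : Measure Ω) [IsProbabilityMeasure μ]
    (X : Ω → EX) (Y : Ω → EY) (hX : Measurable X) (hY : Measurable Y)
    (G : MeasurableSpace Ω) (hG : G ≤ MeasurableSpace.comap X mEX)
    (hCI : CondIndepSigma mΩ μ (MeasurableSpace.comap X mEX) (MeasurableSpace.comap Y mEY) G)
    (f : Ω → ℝ) (hf : Measurable[MeasurableSpace.comap X mEX] f)
    (hf2 : MemLp f 2 μ) (hf0 : ∫ ω, f ω ∂μ = 0)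
    (horth : ∀ h : Ω → ℝ, Measurable[MeasurableSpace.comap X mEX] h → MemLp h 2 μ →
      (∫ ω, h ω ∂μ = 0) → (μ[h|MeasurableSpace.comap Y mEY] =ᵐ[μ] 0) →
      ∫ ω, f ω * h ω ∂μ = 0) :
    f =ᵐ[μ] μ[f|G] ∧ ∃ g : Ω → ℝ, Measurable[G] g ∧ f =ᵐ[μ] g := by
  set mX := MeasurableSpace.comap X mEX with hmXdef
  set mY := MeasurableSpace.comap Y mEY with hmYdef
  letI : MeasurableSpace Ω := mΩ
  have hXm : mX ≤ mΩ := hX.comap_le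
  have hYm : mY ≤ mΩ := hY.comap_le
  have hGm : G ≤ mΩ := hG.trans hXm
  haveI : SigmaFinite (μ.trim hXm) := inferInstance
  haveI : SigmaFinite (μ.trim hYm) := inferInstance
  haveI : SigmaFinite (μ.trim hGm) := inferInstance
  -- basic facts on indicators
  have hindmem : ∀ S : Set Ω, MeasurableSet[mΩ] S →
      MemLp (S.indicator (fun _ => (1:ℝ))) 2 μ := fun S hS =>
    (memLp_const (1:ℝ)).indicator hS
  -- Step A : μ[1_B | G] is a version of μ[1_B | mX]
  have stepA : ∀ B : Set Ω, MeasurableSet[mY] B →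
      μ[B.indicator (fun _ => (1:ℝ))|G] =ᵐ[μ] μ[B.indicator (fun _ => (1:ℝ))|mX] := by
    intro B hB
    have hindB := hindmem B (hYm B hB)
    refine ae_eq_condExp_of_forall_setIntegral_eq hXm (hindB.integrable one_le_two)
      (fun s _ _ => integrable_condExp.integrableOn) (fun A hA hμA => ?_)
      ((stronglyMeasurable_condExp.mono hG).aestronglyMeasurable)
    have hAΩ : MeasurableSet[mΩ] A := hXm A hA
    have hindA := hindmem A hAΩ
    calc ∫ x in A, (μ[B.indicator (fun _ => (1:ℝ))|G]) x ∂μ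
        = ∫ ω, (μ[B.indicator (fun _ => (1:ℝ))|G]) ω * A.indicator (fun _ => (1:ℝ)) ω ∂μ :=
          my_setint hAΩ _
      _ = ∫ ω, (μ[B.indicator (fun _ => (1:ℝ))|G]) ω * (μ[A.indicator (fun _ => (1:ℝ))|G]) ω ∂μ :=
          my_pullout hGm stronglyMeasurable_condExp
            (my_L2_mul (my_memL2_condExp hGm hindB) hindA) (hindA.integrable one_le_two)
      _ = ∫ ω, (μ[A.indicator (fun _ => (1:ℝ))|G]) ω * (μ[B.indicator (fun _ => (1:ℝ))|G]) ω ∂μ := by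
          simp_rw [mul_comm]
      _ = ∫ ω, (μ[(A ∩ B).indicator (fun _ => (1:ℝ))|G]) ω ∂μ :=
          (integral_congr_ae (hCI A hA B hB)).symm
      _ = ∫ ω, (A ∩ B).indicator (fun _ => (1:ℝ)) ω ∂μ := integral_condExp hGm
      _ = ∫ x in A, B.indicator (fun _ => (1:ℝ)) x ∂μ := by
          rw [← Set.indicator_indicator, integral_indicator hAΩ]
  -- the centered residual
  set h : Ω → ℝ := fun ω => f ω - (μ[f|G]) ω with hhdef
  have hfsm : StronglyMeasurable[mX] f := hf.stronglyMeasurable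
  have hfG2 : MemLp (μ[f|G]) 2 μ := my_memL2_condExp hGm hf2
  have hh2 : MemLp h 2 μ := hf2.sub hfG2
  have hhint : Integrable h μ := hh2.integrable one_le_two
  have hfint : Integrable f μ := hf2.integrable one_le_two
  -- Step B preliminary : for B ∈ mY, ∫_B f = ∫_B μ[f|G]
  have stepB : ∀ B : Set Ω, MeasurableSet[mY] B →
      ∫ x in B, f x ∂μ = ∫ x in B, (μ[f|G]) x ∂μ := by
    intro B hB
    have hBΩ : MeasurableSet[mΩ] B := hYm B hB
    have hindB := hindmem B hBΩ
    have hcB2 : MemLp (μ[B.indicator (fun _ => (1:ℝ))|G]) 2 μ := my_memL2_condExp hGm hindB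
    calc ∫ x in B, f x ∂μ
        = ∫ ω, f ω * B.indicator (fun _ => (1:ℝ)) ω ∂μ := my_setint hBΩ f
      _ = ∫ ω, f ω * (μ[B.indicator (fun _ => (1:ℝ))|mX]) ω ∂μ :=
          my_pullout hXm hfsm (my_L2_mul hf2 hindB) (hindB.integrable one_le_two)
      _ = ∫ ω, f ω * (μ[B.indicator (fun _ => (1:ℝ))|G]) ω ∂μ := by
          refine integral_congr_ae ?_
          filter_upwards [stepA B hB] with ω hω
          rw [← hω]
      _ = ∫ ω, (μ[B.indicator (fun _ => (1:ℝ))|G]) ω * f ω ∂μ := by simp_rw [mul_comm]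
      _ = ∫ ω, (μ[B.indicator (fun _ => (1:ℝ))|G]) ω * (μ[f|G]) ω ∂μ :=
          my_pullout hGm stronglyMeasurable_condExp (my_L2_mul hcB2 hf2) hfint
      _ = ∫ ω, (μ[f|G]) ω * (μ[B.indicator (fun _ => (1:ℝ))|G]) ω ∂μ := by simp_rw [mul_comm]
      _ = ∫ ω, (μ[f|G]) ω * B.indicator (fun _ => (1:ℝ)) ω ∂μ :=
          (my_pullout hGm stronglyMeasurable_condExp (my_L2_mul hfG2 hindB)
            (hindB.integrable one_le_two)).symm
      _ = ∫ x in B, (μ[f|G]) x ∂μ := (my_setint hBΩ _).symm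
  -- Step B : μ[h | mY] = 0 a.e.
  have hB0 : μ[h|mY] =ᵐ[μ] 0 := by
    have : (0 : Ω → ℝ) =ᵐ[μ] μ[h|mY] := by
      refine ae_eq_condExp_of_forall_setIntegral_eq hYm hhint
        (fun s _ _ => (integrable_zero _ _ _).integrableOn) (fun B hB hμB => ?_)
        ((stronglyMeasurable_zero.aestronglyMeasurable) )
      have : ∫ x in B, h x ∂μ = 0 := by
        have hsub : ∫ x in B, h x ∂μ
            = (∫ x in B, f x ∂μ) - ∫ x in B, (μ[f|G]) x ∂μ :=
          integral_sub hfint.integrableOn integrable_condExp.integrableOn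
        rw [hsub, stepB B hB, sub_self]
      simp [this]
    exact this.symm
  -- apply orthogonality
  have hhmeas : Measurable[mX] h :=
    hf.sub ((stronglyMeasurable_condExp.measurable).mono hG le_rfl)
  have hh0 : ∫ ω, h ω ∂μ = 0 := by
    have : ∫ ω, h ω ∂μ = (∫ ω, f ω ∂μ) - ∫ ω, (μ[f|G]) ω ∂μ :=
      integral_sub hfint integrable_condExp
    rw [this, integral_condExp hGm, hf0, sub_self]
  have horthh : ∫ ω, f ω * h ω ∂μ = 0 := horth h hhmeas hh2 hh0 hB0
  -- ∫ μ[f|G] * h = 0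
  have hcfh : ∫ ω, (μ[f|G]) ω * h ω ∂μ = 0 := by
    have h1 : ∫ ω, (μ[f|G]) ω * h ω ∂μ
        = ∫ ω, (μ[f|G]) ω * (μ[h|G]) ω ∂μ :=
      my_pullout hGm stronglyMeasurable_condExp (my_L2_mul hfG2 hh2) hhint
    have h2 : μ[h|G] =ᵐ[μ] 0 := by
      have hsub : μ[h|G] =ᵐ[μ] μ[f|G] - μ[μ[f|G]|G] := condExp_sub hfint integrable_condExp G
      have hproj : μ[μ[f|G]|G] =ᵐ[μ] μ[f|G] := condExp_condExp_of_le le_rfl hGm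
      filter_upwards [hsub, hproj] with ω hω1 hω2
      simp only [Pi.sub_apply] at hω1
      simp [hω1, hω2]
    have h3 : ∫ ω, (μ[f|G]) ω * (μ[h|G]) ω ∂μ = 0 := by
      have : ∀ᵐ ω ∂μ, (μ[f|G]) ω * (μ[h|G]) ω = 0 := by
        filter_upwards [h2] with ω hω
        simp [hω]
      rw [integral_congr_ae this, integral_zero]
    rw [h1, h3]
  -- conclude ∫ h² = 0
  have hsq : ∫ ω, h ω * h ω ∂μ = 0 := by
    have hexp : ∀ ω, h ω * h ω = f ω * h ω - (μ[f|G]) ω * h ω := by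
      intro ω; simp only [hhdef]; ring
    have hint1 : Integrable (fun ω => f ω * h ω) μ := my_L2_mul hf2 hh2
    have hint2 : Integrable (fun ω => (μ[f|G]) ω * h ω) μ := my_L2_mul hfG2 hh2
    calc ∫ ω, h ω * h ω ∂μ
        = ∫ ω, (f ω * h ω - (μ[f|G]) ω * h ω) ∂μ := by simp_rw [hexp]
      _ = (∫ ω, f ω * h ω ∂μ) - ∫ ω, (μ[f|G]) ω * h ω ∂μ := integral_sub hint1 hint2
      _ = 0 := by rw [horthh, hcfh, sub_self]
  have hzero : h =ᵐ[μ] 0 := by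
    have hnonneg : 0 ≤ᵐ[μ] fun ω => h ω * h ω := ae_of_all _ fun ω => mul_self_nonneg _
    have := (integral_eq_zero_iff_of_nonneg_ae hnonneg (my_L2_mul hh2 hh2)).mp hsq
    filter_upwards [this] with ω hω
    exact mul_self_eq_zero.mp hω
  have hfeq : f =ᵐ[μ] μ[f|G] := by
    filter_upwards [hzero] with ω hω
    have : f ω - (μ[f|G]) ω = 0 := hω
    linarith
  exact ⟨hfeq, ⟨μ[f|G], stronglyMeasurable_condExp.measurable, hfeq⟩⟩
end

section
/- Let G be a sub-σ-field of σ(X) with Y ⊥⊥ X | G, and let f : Ω → ℝ be a σ(X)-measurable function in L²(μ) with μ[f|G] = 0 μ-a.e. Then μ[f|σ(Y)] = 0 μ-a.e. -/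
open MeasureTheory ProbabilityTheory

/-- If `Y ⊥⊥ X | G` and a square-integrable `σ(X)`-measurable `f` satisfies
`E[f|G] = 0` a.e., then `E[f|σ(Y)] = 0` a.e. -/
theorem condexp_given_Y_eq_zero_of_condexp_given_G_eq_zero
    {Ω EX EY : Type*} [mΩ : MeasurableSpace Ω] [mEX : MeasurableSpace EX]
    [mEY : MeasurableSpace EY]
    (μ : Measure Ω) [IsProbabilityMeasure μ]
    (X : Ω → EX) (Y : Ω → EY) (hX : Measurable X) (hY : Measurable Y)
    (G : MeasurableSpace Ω) (hG : G ≤ MeasurableSpace.comap X mEX)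
    (hCI : CondIndepSigma mΩ μ (MeasurableSpace.comap X mEX) (MeasurableSpace.comap Y mEY) G)
    (f : Ω → ℝ) (hf : Measurable[MeasurableSpace.comap X mEX] f)
    (hf2 : MemLp f 2 μ) (hfG : μ[f|G] =ᵐ[μ] 0) :
    μ[f|MeasurableSpace.comap Y mEY] =ᵐ[μ] 0 := by
  letI : MeasurableSpace Ω := mΩ
  have hmX0 : MeasurableSpace.comap X mEX ≤ mΩ := hX.comap_le
  have hmY0 : MeasurableSpace.comap Y mEY ≤ mΩ := hY.comap_le
  have hG0 : G ≤ mΩ := hG.trans hmX0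
  have hfint : Integrable f μ := hf2.integrable (by norm_num)
  -- key step: ∫_B f = 0 for all B ∈ σ(Y)
  have key : ∀ B : Set Ω, MeasurableSet[MeasurableSpace.comap Y mEY] B →
      ∫ x in B, f x ∂μ = 0 := by
    intro B hB
    have hBΩ : MeasurableSet[mΩ] B := hmY0 _ hB
    have hIindB : Integrable (B.indicator fun _ => (1 : ℝ)) μ :=
      (integrable_const (1 : ℝ)).indicator hBΩ
    have hgmG : StronglyMeasurable[G] (μ[B.indicator fun _ => (1 : ℝ)|G]) :=
      stronglyMeasurable_condExp
    have hgint : Integrable (μ[B.indicator fun _ => (1 : ℝ)|G]) μ := integrable_condExp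
    -- the conditional expectation of the indicator of B is a.e. bounded by 1
    have hg_bound : ∀ᵐ x ∂μ, ‖(μ[B.indicator fun _ => (1 : ℝ)|G]) x‖ ≤ 1 := by
      have h0 : (0 : Ω → ℝ) ≤ᵐ[μ] μ[B.indicator fun _ => (1 : ℝ)|G] := condExp_nonneg (by
        refine Filter.Eventually.of_forall fun x => ?_
        by_cases hx : x ∈ B <;> simp [Set.indicator_apply, hx])
      have h1 : μ[B.indicator fun _ => (1 : ℝ)|G] ≤ᵐ[μ] μ[(fun _ => (1 : ℝ))|G] := by
        refine condExp_mono hIindB (integrable_const (1 : ℝ)) ?_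
        refine Filter.Eventually.of_forall fun x => ?_
        by_cases hx : x ∈ B <;> simp [Set.indicator_apply, hx]
      have hc : μ[(fun _ : Ω => (1 : ℝ))|G] = fun _ => (1 : ℝ) := condExp_const hG0 (1 : ℝ)
      rw [hc] at h1
      filter_upwards [h0, h1] with x h0x h1x
      simp only [Pi.zero_apply] at h0x
      rw [Real.norm_eq_abs, abs_le]
      exact ⟨by linarith, h1x⟩
    -- Step (d): μ[1_B | σ(X)] = μ[1_B | G] a.e.
    have hd : μ[B.indicator fun _ => (1 : ℝ)|G]
        =ᵐ[μ] μ[B.indicator fun _ => (1 : ℝ)|MeasurableSpace.comap X mEX] := by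
      refine ae_eq_condExp_of_forall_setIntegral_eq hmX0 hIindB
        (fun s _ _ => hgint.integrableOn) (fun A hA _ => ?_)
        ((hgmG.mono hG).aestronglyMeasurable)
      have hAΩ : MeasurableSet[mΩ] A := hmX0 _ hA
      have hIgA : Integrable ((μ[B.indicator fun _ => (1 : ℝ)|G]) *
          (A.indicator fun _ => (1 : ℝ))) μ := by
        have heq : (μ[B.indicator fun _ => (1 : ℝ)|G]) * (A.indicator fun _ => (1 : ℝ))
            = A.indicator (μ[B.indicator fun _ => (1 : ℝ)|G]) := by
          funext x
          by_cases hx : x ∈ A <;> simp [Set.indicator_apply, hx]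
        rw [heq]
        exact hgint.indicator hAΩ
      have hIindA : Integrable (A.indicator fun _ => (1 : ℝ)) μ :=
        (integrable_const (1 : ℝ)).indicator hAΩ
      calc ∫ x in A, (μ[B.indicator fun _ => (1 : ℝ)|G]) x ∂μ
          = ∫ x, ((μ[B.indicator fun _ => (1 : ℝ)|G]) * (A.indicator fun _ => (1 : ℝ))) x ∂μ := by
            rw [← integral_indicator hAΩ]
            congr 1
            funext x
            by_cases hx : x ∈ A <;> simp [Set.indicator_apply, hx]
        _ = ∫ x, (μ[(μ[B.indicator fun _ => (1 : ℝ)|G]) * (A.indicator fun _ => (1 : ℝ))|G]) x ∂μ :=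
            (integral_condExp hG0).symm
        _ = ∫ x, (μ[(A ∩ B).indicator (fun _ => (1 : ℝ))|G]) x ∂μ := by
            refine integral_congr_ae ?_
            have hpull := condExp_mul_of_stronglyMeasurable_left hgmG hIgA hIindA
            have hci := hCI A hA B hB
            filter_upwards [hpull, hci] with x hpx hcx
            rw [hpx, hcx]
            simp only [Pi.mul_apply]
            ring
        _ = ∫ x, (A ∩ B).indicator (fun _ => (1 : ℝ)) x ∂μ := integral_condExp hG0
        _ = ∫ x in A, B.indicator (fun _ => (1 : ℝ)) x ∂μ := by
            rw [← integral_indicator hAΩ, Set.indicator_indicator]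
    -- Main chain
    have hIfB : Integrable (f * B.indicator fun _ => (1 : ℝ)) μ := by
      have heq : f * (B.indicator fun _ => (1 : ℝ)) = B.indicator f := by
        funext x
        by_cases hx : x ∈ B <;> simp [Set.indicator_apply, hx]
      rw [heq]
      exact hfint.indicator hBΩ
    have hIgf : Integrable ((μ[B.indicator fun _ => (1 : ℝ)|G]) * f) μ :=
      hfint.bdd_mul hgint.aestronglyMeasurable hg_bound
    calc ∫ x in B, f x ∂μ
        = ∫ x, (f * B.indicator fun _ => (1 : ℝ)) x ∂μ := by
          rw [← integral_indicator hBΩ]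
          congr 1
          funext x
          by_cases hx : x ∈ B <;> simp [Set.indicator_apply, hx]
      _ = ∫ x, (μ[f * B.indicator fun _ => (1 : ℝ)|MeasurableSpace.comap X mEX]) x ∂μ :=
          (integral_condExp hmX0).symm
      _ = ∫ x, ((μ[B.indicator fun _ => (1 : ℝ)|G]) * f) x ∂μ := by
          refine integral_congr_ae ?_
          have hpull := condExp_mul_of_stronglyMeasurable_left hf.stronglyMeasurable hIfB hIindB
          filter_upwards [hpull, hd] with x hpx hdx
          rw [hpx]
          simp only [Pi.mul_apply]
          rw [← hdx, mul_comm]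
      _ = ∫ x, (μ[(μ[B.indicator fun _ => (1 : ℝ)|G]) * f|G]) x ∂μ := (integral_condExp hG0).symm
      _ = 0 := by
          rw [← integral_zero Ω ℝ (μ := μ)]
          refine integral_congr_ae ?_
          have hpull := condExp_mul_of_stronglyMeasurable_left hgmG hIgf hfint
          filter_upwards [hpull, hfG] with x hpx hfx
          rw [hpx]
          simp only [Pi.mul_apply]
          rw [hfx]
          simp
  -- conclude by uniqueness of conditional expectation
  have h0 : (0 : Ω → ℝ) =ᵐ[μ] μ[f|MeasurableSpace.comap Y mEY] := by
    refine ae_eq_condExp_of_forall_setIntegral_eq hmY0 hfint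
      (fun s _ _ => (integrable_zero _ _ _).integrableOn) (fun s hs _ => ?_)
      (stronglyMeasurable_zero.aestronglyMeasurable)
    simp [key s hs]
  exact h0.symm
end

section
/- Let G be a sub-σ-field of σ(X) with Y ⊥⊥ X | G, and let f : Ω → ℝ be a σ(X)-measurable, μ-integrable function. Then μ[f | σ(Y) ⊔ G] = μ[f | G] μ-a.e., where σ(Y) ⊔ G denotes the σ-field generated by σ(Y) and G. -/
open MeasureTheory ProbabilityTheory

section Aux

variable {Ω : Type*} (mX mY G : MeasurableSpace Ω) [mΩ : MeasurableSpace Ω]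
  (μ : Measure Ω) [IsProbabilityMeasure μ]

/-- The key identity for indicator functions. -/
lemma aux_setIntegral_indicator_eq (hXm : mX ≤ mΩ) (hYm : mY ≤ mΩ) (hG : G ≤ mX)
    (hCI : CondIndepSigma mΩ μ mX mY G)
    {B C : Set Ω} (hB : MeasurableSet[mY] B) (hC : MeasurableSet[G] C)
    {A : Set Ω} (hA : MeasurableSet[mX] A) :
    ∫ x in B ∩ C, (A.indicator (fun _ => (1 : ℝ))) x ∂μ
      = ∫ x in B ∩ C, (μ[A.indicator (fun _ => (1 : ℝ))|G]) x ∂μ := by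
  have hGm : G ≤ mΩ := hG.trans hXm
  have hBm : MeasurableSet[mΩ] B := hYm _ hB
  have hCm : MeasurableSet[mΩ] C := hGm _ hC
  have hAm : MeasurableSet[mΩ] A := hXm _ hA
  have hABi : Integrable ((A ∩ B).indicator (fun _ => (1 : ℝ))) μ :=
    (integrable_const 1).indicator (hAm.inter hBm)
  set g : Ω → ℝ := μ[A.indicator (fun _ => (1 : ℝ))|G] with hg
  have hgi : Integrable (B.indicator g) μ := integrable_condExp.indicator hBm
  have hBi : Integrable (B.indicator (fun _ => (1 : ℝ))) μ := (integrable_const 1).indicator hBm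
  have hmulrw : B.indicator g = g * B.indicator (fun _ => (1 : ℝ)) := by
    funext x; by_cases hx : x ∈ B <;> simp [hx]
  have hpull : μ[B.indicator g|G]
      =ᵐ[μ] fun x => g x * (μ[B.indicator (fun _ => (1 : ℝ))|G]) x := by
    rw [hmulrw]
    exact condExp_mul_of_stronglyMeasurable_left stronglyMeasurable_condExp (hmulrw ▸ hgi) hBi
  have hCIab := hCI A hA B hB
  have lhs : ∫ x in B ∩ C, (A.indicator (fun _ => (1 : ℝ))) x ∂μ
      = (μ (A ∩ B ∩ C)).toReal := by
    rw [setIntegral_indicator hAm]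
    have : B ∩ C ∩ A = A ∩ B ∩ C := by
      ext x; simp only [Set.mem_inter_iff]; tauto
    simp [this, measureReal_def]
  have rhs : ∫ x in B ∩ C, g x ∂μ = (μ (A ∩ B ∩ C)).toReal := by
    have h0 : ∫ x in B ∩ C, g x ∂μ = ∫ x in C, (B.indicator g) x ∂μ := by
      rw [setIntegral_indicator hBm, Set.inter_comm]
    rw [h0, ← setIntegral_condExp hGm hgi hC]
    have h1 : ∫ x in C, (μ[B.indicator g|G]) x ∂μ
        = ∫ x in C, (μ[(A ∩ B).indicator (fun _ => (1 : ℝ))|G]) x ∂μ :=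
      integral_congr_ae (ae_restrict_of_ae (hpull.trans hCIab.symm))
    rw [h1, setIntegral_condExp hGm hABi hC, setIntegral_indicator (hAm.inter hBm)]
    have : C ∩ (A ∩ B) = A ∩ B ∩ C := by
      ext x; simp only [Set.mem_inter_iff]; tauto
    simp [this, measureReal_def]
  rw [lhs, rhs]

/-- The key identity for general integrable `mX`-measurable functions. -/
lemma aux_setIntegral_eq (hXm : mX ≤ mΩ) (hYm : mY ≤ mΩ) (hG : G ≤ mX)
    (hCI : CondIndepSigma mΩ μ mX mY G)
    {B C : Set Ω} (hB : MeasurableSet[mY] B) (hC : MeasurableSet[G] C) :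
    ∀ ⦃f : Ω → ℝ⦄, Integrable f (μ.trim hXm) →
      ∫ x in B ∩ C, f x ∂μ = ∫ x in B ∩ C, (μ[f|G]) x ∂μ := by
  have hGm : G ≤ mΩ := hG.trans hXm
  have est : ∀ u v : Ω → ℝ, Integrable u μ → Integrable v μ →
      |(∫ x in B ∩ C, u x ∂μ) - ∫ x in B ∩ C, v x ∂μ| ≤ ∫ x, |u x - v x| ∂μ := by
    intro u v hu hv
    rw [← integral_sub hu.integrableOn hv.integrableOn]
    calc |∫ x in B ∩ C, (u x - v x) ∂μ| ≤ ∫ x in B ∩ C, |u x - v x| ∂μ := by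
          simpa [Real.norm_eq_abs] using
            norm_integral_le_integral_norm (μ := μ.restrict (B ∩ C)) (fun x => u x - v x)
      _ ≤ ∫ x, |u x - v x| ∂μ :=
          setIntegral_le_integral (hu.sub hv).abs
            (Filter.Eventually.of_forall fun x => abs_nonneg _)
  have dist_eq : ∀ φ ψ : Lp ℝ 1 (μ.trim hXm), dist φ ψ = ∫ x, |φ x - ψ x| ∂μ := by
    intro φ ψ
    rw [L1.dist_eq_integral_dist]
    simp_rw [Real.dist_eq]
    exact (integral_trim_ae hXm (((Lp.aestronglyMeasurable φ).sub
      (Lp.aestronglyMeasurable ψ)).norm.congr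
        (Filter.Eventually.of_forall fun x => by simp [Real.norm_eq_abs]))).symm
  refine @Integrable.induction Ω ℝ mX _ (μ.trim hXm)
    (fun u => ∫ x in B ∩ C, u x ∂μ = ∫ x in B ∩ C, (μ[u|G]) x ∂μ) ?_ ?_ ?_ ?_
  · -- indicators
    intro c s hs _
    have heq : s.indicator (fun _ => c) = c • s.indicator (fun _ => (1 : ℝ)) := by
      funext x; by_cases hx : x ∈ s <;> simp [hx]
    have hsmul : μ[c • s.indicator (fun _ => (1 : ℝ))|G]
        =ᵐ[μ] c • μ[s.indicator (fun _ => (1 : ℝ))|G] := condExp_smul c _ G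
    rw [heq]
    calc ∫ x in B ∩ C, (c • s.indicator (fun _ => (1 : ℝ))) x ∂μ
        = c * ∫ x in B ∩ C, s.indicator (fun _ => (1 : ℝ)) x ∂μ := by
          simp only [Pi.smul_apply, smul_eq_mul]
          exact integral_const_mul c _
      _ = c * ∫ x in B ∩ C, (μ[s.indicator (fun _ => (1 : ℝ))|G]) x ∂μ := by
          rw [aux_setIntegral_indicator_eq mX mY G μ hXm hYm hG hCI hB hC hs]
      _ = ∫ x in B ∩ C, (c • μ[s.indicator (fun _ => (1 : ℝ))|G]) x ∂μ := by
          simp only [Pi.smul_apply, smul_eq_mul]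
          exact (integral_const_mul c _).symm
      _ = ∫ x in B ∩ C, (μ[c • s.indicator (fun _ => (1 : ℝ))|G]) x ∂μ :=
          (integral_congr_ae (ae_restrict_of_ae hsmul)).symm
  · -- addition
    intro p q _ hpi' hqi' hp hq
    have hpi : Integrable p μ := integrable_of_integrable_trim hXm hpi'
    have hqi : Integrable q μ := integrable_of_integrable_trim hXm hqi'
    have hadd : μ[p + q|G] =ᵐ[μ] μ[p|G] + μ[q|G] := condExp_add hpi hqi G
    calc ∫ x in B ∩ C, (p + q) x ∂μ
        = (∫ x in B ∩ C, p x ∂μ) + ∫ x in B ∩ C, q x ∂μ := by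
          simp only [Pi.add_apply]
          exact integral_add hpi.integrableOn hqi.integrableOn
      _ = (∫ x in B ∩ C, (μ[p|G]) x ∂μ) + ∫ x in B ∩ C, (μ[q|G]) x ∂μ := by rw [hp, hq]
      _ = ∫ x in B ∩ C, ((μ[p|G]) + (μ[q|G])) x ∂μ := by
          simp only [Pi.add_apply]
          exact (integral_add integrable_condExp.integrableOn
            integrable_condExp.integrableOn).symm
      _ = ∫ x in B ∩ C, (μ[p + q|G]) x ∂μ :=
          (integral_congr_ae (ae_restrict_of_ae hadd)).symm
  · -- closedness in L¹ of the trimmed measure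
    have hcont1 : Continuous fun φ : Lp ℝ 1 (μ.trim hXm) => ∫ x in B ∩ C, φ x ∂μ := by
      refine (LipschitzWith.of_dist_le_mul (K := 1) fun φ ψ => ?_).continuous
      rw [NNReal.coe_one, one_mul, Real.dist_eq, dist_eq φ ψ]
      exact est _ _ (integrable_of_integrable_trim hXm (L1.integrable_coeFn φ))
        (integrable_of_integrable_trim hXm (L1.integrable_coeFn ψ))
    have hcont2 : Continuous fun φ : Lp ℝ 1 (μ.trim hXm) => ∫ x in B ∩ C, (μ[⇑φ|G]) x ∂μ := by
      refine (LipschitzWith.of_dist_le_mul (K := 1) fun φ ψ => ?_).continuous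
      rw [NNReal.coe_one, one_mul, Real.dist_eq, dist_eq φ ψ]
      have hφ : Integrable (⇑φ) μ := integrable_of_integrable_trim hXm (L1.integrable_coeFn φ)
      have hψ : Integrable (⇑ψ) μ := integrable_of_integrable_trim hXm (L1.integrable_coeFn ψ)
      refine (est _ _ integrable_condExp integrable_condExp).trans ?_
      have hsub : μ[⇑φ - ⇑ψ|G] =ᵐ[μ] μ[⇑φ|G] - μ[⇑ψ|G] := condExp_sub hφ hψ G
      have h1 : ∫ x, |(μ[⇑φ|G]) x - (μ[⇑ψ|G]) x| ∂μ = ∫ x, |(μ[⇑φ - ⇑ψ|G]) x| ∂μ := by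
        refine integral_congr_ae ?_
        filter_upwards [hsub] with x hx
        rw [hx]; simp
      rw [h1]
      simpa using integral_abs_condExp_le (μ := μ) (m := G) (⇑φ - ⇑ψ)
    exact isClosed_eq hcont1 hcont2
  · -- a.e. congruence
    intro p q hpq hpi' hp
    have hpq' : p =ᵐ[μ] q := ae_eq_of_ae_eq_trim hpq
    have h1 : ∫ x in B ∩ C, q x ∂μ = ∫ x in B ∩ C, p x ∂μ :=
      integral_congr_ae (ae_restrict_of_ae hpq'.symm)
    have h2 : μ[p|G] =ᵐ[μ] μ[q|G] := condExp_congr_ae hpq'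
    rw [h1, hp]
    exact integral_congr_ae (ae_restrict_of_ae h2)

end Aux

lemma aux_compl {Ω : Type*} [mΩ : MeasurableSpace Ω] (μ : Measure Ω) [IsProbabilityMeasure μ]
    {u v : Ω → ℝ} (hu : Integrable u μ) (hv : Integrable v μ)
    (hint : ∫ x, u x ∂μ = ∫ x, v x ∂μ) {t : Set Ω} (htm : MeasurableSet t)
    (h : ∫ x in t, u x ∂μ = ∫ x in t, v x ∂μ) :
    ∫ x in tᶜ, u x ∂μ = ∫ x in tᶜ, v x ∂μ := by
  have h1 := integral_add_compl htm hu
  have h2 := integral_add_compl htm hv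
  linarith

lemma aux_iUnion {Ω : Type*} [mΩ : MeasurableSpace Ω] (μ : Measure Ω)
    {u v : Ω → ℝ} (hu : Integrable u μ) (hv : Integrable v μ)
    {s : ℕ → Set Ω} (hms : ∀ i, MeasurableSet (s i)) (hd : Pairwise (Function.onFun Disjoint s))
    (h : ∀ i, ∫ x in s i, u x ∂μ = ∫ x in s i, v x ∂μ) :
    ∫ x in ⋃ i, s i, u x ∂μ = ∫ x in ⋃ i, s i, v x ∂μ := by
  rw [integral_iUnion hms hd hu.integrableOn, integral_iUnion hms hd hv.integrableOn]
  exact tsum_congr h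

lemma aux_intOn {Ω : Type*} [mΩ : MeasurableSpace Ω] {μ : Measure Ω} {u : Ω → ℝ}
    (hu : Integrable u μ) (s : Set Ω) : IntegrableOn u s μ := hu.integrableOn

/-- If `Y ⊥⊥ X | G` then for any integrable `σ(X)`-measurable `f`,
`E[f | σ(Y) ⊔ G] = E[f | G]` a.e. -/
theorem condexp_join_eq_condexp_of_condIndep
    {Ω EX EY : Type*} [mΩ : MeasurableSpace Ω] [mEX : MeasurableSpace EX]
    [mEY : MeasurableSpace EY]
    (μ : Measure Ω) [IsProbabilityMeasure μ]
    (X : Ω → EX) (Y : Ω → EY) (hX : Measurable X) (hY : Measurable Y)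
    (G : MeasurableSpace Ω) (hG : G ≤ MeasurableSpace.comap X mEX)
    (hCI : CondIndepSigma mΩ μ (MeasurableSpace.comap X mEX) (MeasurableSpace.comap Y mEY) G)
    (f : Ω → ℝ) (hf : Measurable[MeasurableSpace.comap X mEX] f)
    (hfi : Integrable f μ) :
    μ[f|MeasurableSpace.comap Y mEY ⊔ G] =ᵐ[μ] μ[f|G] := by
  have hXm : (MeasurableSpace.comap X mEX) ≤ mΩ := hX.comap_le
  have hYm : (MeasurableSpace.comap Y mEY) ≤ mΩ := hY.comap_le
  have hGm : G ≤ mΩ := hG.trans hXm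
  have hm' : (MeasurableSpace.comap Y mEY) ⊔ G ≤ mΩ := sup_le hYm hGm
  have hfi' : Integrable f (μ.trim hXm) :=
    hfi.trim hXm (Measurable.stronglyMeasurable hf)
  -- the π-system generating `(MeasurableSpace.comap Y mEY) ⊔ G`
  set S : Set (Set Ω) := {s | ∃ B C : Set Ω, MeasurableSet[(MeasurableSpace.comap Y mEY)] B ∧ MeasurableSet[G] C ∧ s = B ∩ C}
    with hS
  have h_gen : (MeasurableSpace.comap Y mEY) ⊔ G = MeasurableSpace.generateFrom S := by
    refine le_antisymm (sup_le ?_ ?_) (MeasurableSpace.generateFrom_le ?_)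
    · intro t ht
      exact MeasurableSpace.measurableSet_generateFrom
        ⟨t, Set.univ, ht, MeasurableSet.univ, (Set.inter_univ t).symm⟩
    · intro t ht
      exact MeasurableSpace.measurableSet_generateFrom
        ⟨Set.univ, t, MeasurableSet.univ, ht, (Set.univ_inter t).symm⟩
    · rintro s ⟨B, C, hB, hC, rfl⟩
      exact MeasurableSet.inter ((le_sup_left : (MeasurableSpace.comap Y mEY) ≤ (MeasurableSpace.comap Y mEY) ⊔ G) _ hB)
        ((le_sup_right : G ≤ (MeasurableSpace.comap Y mEY) ⊔ G) _ hC)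
  have h_pi : IsPiSystem S := by
    rintro s ⟨B, C, hB, hC, rfl⟩ t ⟨B', C', hB', hC', rfl⟩ -
    refine ⟨B ∩ B', C ∩ C', hB.inter hB', hC.inter hC', ?_⟩
    ext x; simp only [Set.mem_inter_iff]; tauto
  -- the set-integral identity for all sets in `(MeasurableSpace.comap Y mEY) ⊔ G`
  have h_eq : ∀ t : Set Ω, MeasurableSet[(MeasurableSpace.comap Y mEY) ⊔ G] t →
      ∫ x in t, f x ∂μ = ∫ x in t, (μ[f|G]) x ∂μ := by
    have := @MeasurableSpace.induction_on_inter Ω ((MeasurableSpace.comap Y mEY) ⊔ G)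
      (fun t _ => ∫ x in t, f x ∂μ = ∫ x in t, (μ[f|G]) x ∂μ) S h_gen h_pi
    refine fun t ht => this ?_ ?_ ?_ ?_ t ht
    · simp
    · rintro s ⟨B, C, hB, hC, rfl⟩
      exact aux_setIntegral_eq (mΩ := mΩ) (MeasurableSpace.comap X mEX) (MeasurableSpace.comap Y mEY) G μ hXm hYm hG hCI hB hC hfi'
    · intro t ht h
      exact aux_compl (mΩ := mΩ) μ hfi integrable_condExp
        (integral_condExp hGm (f := f)).symm (hm' _ ht) h
    · intro s hd hsm h
      exact aux_iUnion (mΩ := mΩ) μ hfi integrable_condExp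
        (fun i => hm' _ (hsm i)) hd h
  refine (ae_eq_condExp_of_forall_setIntegral_eq hm' hfi
    (fun s _ _ => aux_intOn (mΩ := mΩ) integrable_condExp s)
    (fun s hs _ => (h_eq s hs).symm)
    (StronglyMeasurable.aestronglyMeasurable (StronglyMeasurable.mono (stronglyMeasurable_condExp (m := G) (μ := μ) (f := f)) le_sup_right))).symm
end

section
/- Let G be a sub-σ-field of σ(X) with Y ⊥⊥ X | G, and suppose the class of G-measurable functions is complete, i.e., every G-measurable f ∈ L²(μ) with μ[f|σ(Y)] = 0 μ-a.e. satisfies f = 0 μ-a.e. Then for every σ(X)-measurable f : Ω → ℝ in L²(μ) with ∫ f dμ = 0, the following are equivalent: (i) f is μ-a.e. equal to a G-measurable function; (ii) ∫ f·h dμ = 0 for every σ(X)-measurable h : Ω → ℝ in L²(μ) with ∫ h dμ = 0 and μ[h|σ(Y)] = 0 μ-a.e. -/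
open MeasureTheory ProbabilityTheory

lemma aux_integrable_mul {Ω : Type*} [mΩ : MeasurableSpace Ω] {μ : Measure Ω}
    {f g : Ω → ℝ} (hf : MemLp f 2 μ) (hg : MemLp g 2 μ) :
    Integrable (fun ω => f ω * g ω) μ := by
  have h := hg.smul hf (p := 2) (q := 2) (r := 1)
    (hpqr := ⟨by rw [ENNReal.inv_two_add_inv_two, inv_one]⟩)
  rw [← memLp_one_iff_integrable]
  exact (by simpa [smul_eq_mul, mul_comm] using h : MemLp (f * g) 1 μ)

set_option maxHeartbeats 1000000 in
lemma aux_memℒp_condexp {Ω : Type*} {m : MeasurableSpace Ω} [mΩ : MeasurableSpace Ω]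
    {μ : Measure Ω} [IsFiniteMeasure μ] (hm : m ≤ mΩ)
    {h : Ω → ℝ} (hh : MemLp h 2 μ) : MemLp (μ[h|m]) 2 μ := by
  have heq : ((condExpL2 ℝ ℝ hm (hh.toLp h) : lpMeas ℝ ℝ m 2 μ) : Lp ℝ 2 μ) =ᵐ[μ] μ[h|m] := by
    refine ae_eq_condExp_of_forall_setIntegral_eq hm (hh.integrable one_le_two)
      (fun s _ hμs => integrableOn_Lp_of_measure_ne_top _ one_le_two hμs.ne) ?_ ?_
    · intro s hs hμs
      have h1 := integral_condExpL2_eq (𝕜 := ℝ) hm (hh.toLp h) hs hμs.ne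
      have h2 : ∫ x in s, (hh.toLp h) x ∂μ = ∫ x in s, h x ∂μ :=
        setIntegral_congr_ae (hm s hs) ((hh.coeFn_toLp).mono fun x hx _ => hx)
      rw [← h2, ← h1]
    · exact aestronglyMeasurable_condExpL2 hm _
  exact (Lp.memLp _).ae_eq heq

lemma aux_integral_mul_condexp {Ω : Type*} {m : MeasurableSpace Ω} [mΩ : MeasurableSpace Ω]
    {μ : Measure Ω} [IsFiniteMeasure μ] (hm : m ≤ mΩ)
    {g h : Ω → ℝ} (hgm : StronglyMeasurable[m] g) (hg2 : MemLp g 2 μ) (hh2 : MemLp h 2 μ) :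
    ∫ ω, g ω * h ω ∂μ = ∫ ω, g ω * (μ[h|m]) ω ∂μ := by
  have hint : Integrable (g * h) μ := aux_integrable_mul hg2 hh2
  have hpull := condExp_mul_of_stronglyMeasurable_left hgm hint (hh2.integrable one_le_two)
  calc ∫ ω, g ω * h ω ∂μ = ∫ ω, (g * h) ω ∂μ := rfl
    _ = ∫ ω, (μ[g * h|m]) ω ∂μ := (integral_condExp hm).symm
    _ = ∫ ω, (g * μ[h|m]) ω ∂μ := integral_congr_ae hpull
    _ = ∫ ω, g ω * (μ[h|m]) ω ∂μ := rfl

lemma aux_setIntegral_eq_indicator_mul {Ω : Type*} [mΩ : MeasurableSpace Ω] {μ : Measure Ω}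
    {s : Set Ω} (hs : MeasurableSet s) (k : Ω → ℝ) :
    ∫ x in s, k x ∂μ = ∫ x, s.indicator (fun _ => (1:ℝ)) x * k x ∂μ := by
  rw [← integral_indicator hs]
  congr 1; funext x
  by_cases hx : x ∈ s <;> simp [hx]

set_option maxHeartbeats 1600000 in
theorem aux_main
    {Ω EX EY : Type*} {G : MeasurableSpace Ω} [mΩ : MeasurableSpace Ω]
    [mEX : MeasurableSpace EX] [mEY : MeasurableSpace EY]
    (μ : Measure Ω) [IsProbabilityMeasure μ]
    (X : Ω → EX) (Y : Ω → EY) (hX : Measurable X) (hY : Measurable Y)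
    (hG : G ≤ MeasurableSpace.comap X mEX)
    (hCI : ∀ A : Set Ω, MeasurableSet[MeasurableSpace.comap X mEX] A → ∀ B : Set Ω,
      MeasurableSet[MeasurableSpace.comap Y mEY] B →
      condExp G (m₀ := mΩ) μ ((A ∩ B).indicator (fun _ => (1 : ℝ))) =ᵐ[μ]
      fun ω => (condExp G (m₀ := mΩ) μ (A.indicator (fun _ => (1 : ℝ)))) ω *
        (condExp G (m₀ := mΩ) μ (B.indicator (fun _ => (1 : ℝ)))) ω)
    (hcomplete : ∀ f : Ω → ℝ, Measurable[G] f → MemLp f 2 μ →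
      (μ[f|MeasurableSpace.comap Y mEY] =ᵐ[μ] 0) → f =ᵐ[μ] 0)
    (f : Ω → ℝ) (hf : Measurable[MeasurableSpace.comap X mEX] f)
    (hf2 : MemLp f 2 μ) (hf0 : ∫ ω, f ω ∂μ = 0) :
    (∃ g : Ω → ℝ, Measurable[G] g ∧ f =ᵐ[μ] g) ↔
      (∀ h : Ω → ℝ, Measurable[MeasurableSpace.comap X mEX] h → MemLp h 2 μ →
        (∫ ω, h ω ∂μ = 0) → (μ[h|MeasurableSpace.comap Y mEY] =ᵐ[μ] 0) →
        ∫ ω, f ω * h ω ∂μ = 0) := by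
  have hmX : MeasurableSpace.comap X mEX ≤ mΩ := hX.comap_le
  have hmY : MeasurableSpace.comap Y mEY ≤ mΩ := hY.comap_le
  have hGm : G ≤ mΩ := hG.trans hmX
  -- Step A : for B ∈ σ(Y), μ[1_B|G] =ᵐ μ[1_B|σ(X)]
  have hA : ∀ B : Set Ω, MeasurableSet[MeasurableSpace.comap Y mEY] B →
      μ[B.indicator (fun _ => (1:ℝ))|G] =ᵐ[μ]
        μ[B.indicator (fun _ => (1:ℝ))|MeasurableSpace.comap X mEX] := by
    intro B hB
    have hBm : MeasurableSet[mΩ] B := hmY B hB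
    have hind2 : MemLp (B.indicator fun _ => (1:ℝ)) 2 μ := (memLp_const 1).indicator hBm
    have hcondB2 : MemLp (μ[B.indicator (fun _ => (1:ℝ))|G]) 2 μ :=
      aux_memℒp_condexp hGm hind2
    refine ae_eq_condExp_of_forall_setIntegral_eq hmX
      ((integrable_const (1:ℝ)).indicator hBm)
      (fun s _ _ => integrable_condExp.integrableOn) ?_
      ((stronglyMeasurable_condExp.mono hG).aestronglyMeasurable)
    intro s hs _
    have hsm : MeasurableSet[mΩ] s := hmX s hs
    have hs2 : MemLp (s.indicator fun _ => (1:ℝ)) 2 μ := (memLp_const 1).indicator hsm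
    have hciae := (hCI s hs B hB).trans
      (Filter.Eventually.of_forall fun x => mul_comm _ _)
    calc ∫ x in s, (μ[B.indicator (fun _ => (1:ℝ))|G]) x ∂μ
        = ∫ x, s.indicator (fun _ => (1:ℝ)) x * (μ[B.indicator (fun _ => (1:ℝ))|G]) x ∂μ :=
          aux_setIntegral_eq_indicator_mul hsm _
      _ = ∫ x, (μ[B.indicator (fun _ => (1:ℝ))|G]) x * s.indicator (fun _ => (1:ℝ)) x ∂μ := by
          simp_rw [mul_comm]
      _ = ∫ x, (μ[B.indicator (fun _ => (1:ℝ))|G]) x *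
            (μ[s.indicator (fun _ => (1:ℝ))|G]) x ∂μ :=
          aux_integral_mul_condexp hGm stronglyMeasurable_condExp hcondB2 hs2
      _ = ∫ x, (μ[(s ∩ B).indicator (fun _ => (1:ℝ))|G]) x ∂μ :=
          (integral_congr_ae hciae).symm
      _ = ∫ x, (s ∩ B).indicator (fun _ => (1:ℝ)) x ∂μ := integral_condExp hGm
      _ = ∫ x in s, B.indicator (fun _ => (1:ℝ)) x ∂μ := by
          rw [← integral_indicator hsm]
          congr 1; funext x
          by_cases h1 : x ∈ s <;> by_cases h2 : x ∈ B <;>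
            simp [Set.indicator_apply, h1, h2, Set.mem_inter_iff]
  -- Step B : set-integral identity on σ(Y)-sets
  have hBB : ∀ (h : Ω → ℝ), Measurable[MeasurableSpace.comap X mEX] h → MemLp h 2 μ →
      ∀ B : Set Ω, MeasurableSet[MeasurableSpace.comap Y mEY] B →
      ∫ x in B, h x ∂μ = ∫ x in B, (μ[h|G]) x ∂μ := by
    intro h hhm hh2 B hBY
    have hBm : MeasurableSet[mΩ] B := hmY B hBY
    have hind2 : MemLp (B.indicator fun _ => (1:ℝ)) 2 μ := (memLp_const 1).indicator hBm
    have hcondB2 : MemLp (μ[B.indicator (fun _ => (1:ℝ))|G]) 2 μ :=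
      aux_memℒp_condexp hGm hind2
    have hcondh2 : MemLp (μ[h|G]) 2 μ := aux_memℒp_condexp hGm hh2
    rw [aux_setIntegral_eq_indicator_mul hBm h, aux_setIntegral_eq_indicator_mul hBm _]
    calc ∫ x, B.indicator (fun _ => (1:ℝ)) x * h x ∂μ
        = ∫ x, h x * B.indicator (fun _ => (1:ℝ)) x ∂μ := by simp_rw [mul_comm]
      _ = ∫ x, h x * (μ[B.indicator (fun _ => (1:ℝ))|MeasurableSpace.comap X mEX]) x ∂μ :=
          aux_integral_mul_condexp hmX hhm.stronglyMeasurable hh2 hind2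
      _ = ∫ x, h x * (μ[B.indicator (fun _ => (1:ℝ))|G]) x ∂μ :=
          integral_congr_ae ((hA B hBY).symm.mono fun x hx => by simp only [hx])
      _ = ∫ x, (μ[B.indicator (fun _ => (1:ℝ))|G]) x * h x ∂μ := by simp_rw [mul_comm]
      _ = ∫ x, (μ[B.indicator (fun _ => (1:ℝ))|G]) x * (μ[h|G]) x ∂μ :=
          aux_integral_mul_condexp hGm stronglyMeasurable_condExp hcondB2 hh2
      _ = ∫ x, (μ[h|G]) x * (μ[B.indicator (fun _ => (1:ℝ))|G]) x ∂μ := by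
          simp_rw [mul_comm]
      _ = ∫ x, (μ[h|G]) x * B.indicator (fun _ => (1:ℝ)) x ∂μ :=
          (aux_integral_mul_condexp hGm stronglyMeasurable_condExp hcondh2 hind2).symm
      _ = ∫ x, B.indicator (fun _ => (1:ℝ)) x * (μ[h|G]) x ∂μ := by simp_rw [mul_comm]
  -- Step C : tower property through G
  have hC : ∀ (h : Ω → ℝ), Measurable[MeasurableSpace.comap X mEX] h → MemLp h 2 μ →
      μ[μ[h|G]|MeasurableSpace.comap Y mEY] =ᵐ[μ] μ[h|MeasurableSpace.comap Y mEY] := by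
    intro h hhm hh2
    refine ae_eq_condExp_of_forall_setIntegral_eq hmY (hh2.integrable one_le_two)
      (fun s _ _ => integrable_condExp.integrableOn) ?_
      stronglyMeasurable_condExp.aestronglyMeasurable
    intro s hs _
    rw [setIntegral_condExp hmY integrable_condExp hs]
    exact (hBB h hhm hh2 s hs).symm
  constructor
  · rintro ⟨g, hgmeas, hfg⟩ h hhm hh2 hh0 hhY
    have hcond0 : μ[h|G] =ᵐ[μ] 0 :=
      hcomplete _ stronglyMeasurable_condExp.measurable (aux_memℒp_condexp hGm hh2)
        ((hC h hhm hh2).trans hhY)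
    have hg2 : MemLp g 2 μ := hf2.ae_eq hfg
    calc ∫ ω, f ω * h ω ∂μ = ∫ ω, g ω * h ω ∂μ :=
          integral_congr_ae (hfg.mono fun x hx => by simp only [hx])
      _ = ∫ ω, g ω * (μ[h|G]) ω ∂μ :=
          aux_integral_mul_condexp hGm hgmeas.stronglyMeasurable hg2 hh2
      _ = ∫ ω, (0:ℝ) ∂μ :=
          integral_congr_ae (hcond0.mono fun x hx => by
            simp only [Pi.zero_apply] at hx; simp only [hx, mul_zero])
      _ = 0 := integral_zero _ _
  · intro hreg
    have hg2 : MemLp (μ[f|G]) 2 μ := aux_memℒp_condexp hGm hf2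
    have hgmX : Measurable[MeasurableSpace.comap X mEX] (μ[f|G]) :=
      (stronglyMeasurable_condExp.measurable).mono hG le_rfl
    have hhm : Measurable[MeasurableSpace.comap X mEX] (f - μ[f|G]) := hf.sub hgmX
    have hh2 : MemLp (f - μ[f|G]) 2 μ := hf2.sub hg2
    have hint_f : Integrable f μ := hf2.integrable one_le_two
    have hh0 : ∫ ω, (f - μ[f|G]) ω ∂μ = 0 := by
      simp only [Pi.sub_apply]
      rw [integral_sub hint_f integrable_condExp, integral_condExp hGm, hf0, sub_self]
    have hhY : μ[f - μ[f|G]|MeasurableSpace.comap Y mEY] =ᵐ[μ] 0 := by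
      refine (condExp_sub hint_f integrable_condExp _).trans ?_
      filter_upwards [hC f hf hf2] with x hx
      simp only [Pi.sub_apply, Pi.zero_apply, hx, sub_self]
    have horth : ∫ ω, f ω * (f - μ[f|G]) ω ∂μ = 0 := hreg _ hhm hh2 hh0 hhY
    have hcondh : μ[f - μ[f|G]|G] =ᵐ[μ] 0 := by
      refine (condExp_sub hint_f integrable_condExp _).trans ?_
      rw [condExp_of_stronglyMeasurable hGm stronglyMeasurable_condExp integrable_condExp,
        sub_self]
    have hgorth : ∫ ω, (μ[f|G]) ω * (f - μ[f|G]) ω ∂μ = 0 := by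
      rw [aux_integral_mul_condexp hGm stronglyMeasurable_condExp hg2 hh2]
      calc ∫ ω, (μ[f|G]) ω * (μ[f - μ[f|G]|G]) ω ∂μ = ∫ ω, (0:ℝ) ∂μ :=
            integral_congr_ae (hcondh.mono fun x hx => by
              simp only [Pi.zero_apply] at hx; simp only [hx, mul_zero])
        _ = 0 := integral_zero _ _
    have hsq : ∫ ω, (f - μ[f|G]) ω * (f - μ[f|G]) ω ∂μ = 0 := by
      have hptw : ∀ ω, (f - μ[f|G]) ω * (f - μ[f|G]) ω
          = f ω * (f - μ[f|G]) ω - (μ[f|G]) ω * (f - μ[f|G]) ω := fun ω => by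
        simp only [Pi.sub_apply]; ring
      calc ∫ ω, (f - μ[f|G]) ω * (f - μ[f|G]) ω ∂μ
          = ∫ ω, (f ω * (f - μ[f|G]) ω - (μ[f|G]) ω * (f - μ[f|G]) ω) ∂μ := by
            simp_rw [hptw]
        _ = (∫ ω, f ω * (f - μ[f|G]) ω ∂μ) - ∫ ω, (μ[f|G]) ω * (f - μ[f|G]) ω ∂μ :=
            integral_sub (aux_integrable_mul hf2 hh2) (aux_integrable_mul hg2 hh2)
        _ = 0 := by rw [horth, hgorth, sub_zero]
    have hh_ae0 : (f - μ[f|G]) =ᵐ[μ] 0 := by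
      have hnn : 0 ≤ᵐ[μ] fun ω => (f - μ[f|G]) ω * (f - μ[f|G]) ω :=
        Filter.Eventually.of_forall fun ω => mul_self_nonneg _
      have h0 := (integral_eq_zero_iff_of_nonneg_ae hnn (aux_integrable_mul hh2 hh2)).mp hsq
      filter_upwards [h0] with x hx
      have hx' : (f - μ[f|G]) x * (f - μ[f|G]) x = 0 := hx
      simpa using mul_self_eq_zero.mp hx'
    refine ⟨μ[f|G], stronglyMeasurable_condExp.measurable, ?_⟩
    filter_upwards [hh_ae0] with x hx
    have hx' : f x - (μ[f|G]) x = 0 := hx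
    linarith

/-- Under completeness of a sufficient class, a centered square-integrable
`σ(X)`-measurable `f` is a.e. equal to a `G`-measurable function iff it belongs to the
regression class (it is orthogonal to all centered square-integrable `σ(X)`-measurable
`h` with `E[h|σ(Y)] = 0`). -/
theorem complete_class_eq_regression_class
    {Ω EX EY : Type*} [mΩ : MeasurableSpace Ω] [mEX : MeasurableSpace EX]
    [mEY : MeasurableSpace EY]
    (μ : Measure Ω) [IsProbabilityMeasure μ]
    (X : Ω → EX) (Y : Ω → EY) (hX : Measurable X) (hY : Measurable Y)
    (G : MeasurableSpace Ω) (hG : G ≤ MeasurableSpace.comap X mEX)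
    (hCI : CondIndepSigma mΩ μ (MeasurableSpace.comap X mEX) (MeasurableSpace.comap Y mEY) G)
    (hcomplete : ∀ f : Ω → ℝ, Measurable[G] f → MemLp f 2 μ →
      (μ[f|MeasurableSpace.comap Y mEY] =ᵐ[μ] 0) → f =ᵐ[μ] 0)
    (f : Ω → ℝ) (hf : Measurable[MeasurableSpace.comap X mEX] f)
    (hf2 : MemLp f 2 μ) (hf0 : ∫ ω, f ω ∂μ = 0) :
    (∃ g : Ω → ℝ, Measurable[G] g ∧ f =ᵐ[μ] g) ↔
      (∀ h : Ω → ℝ, Measurable[MeasurableSpace.comap X mEX] h → MemLp h 2 μ →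
        (∫ ω, h ω ∂μ = 0) → (μ[h|MeasurableSpace.comap Y mEY] =ᵐ[μ] 0) →
        ∫ ω, f ω * h ω ∂μ = 0) := by
  exact aux_main (mΩ := mΩ) μ X Y hX hY hG hCI hcomplete f hf hf2 hf0
end

section
/- Suppose there is a Markov kernel κ from E_Y to E_X that is a regular conditional distribution of X given Y, and a σ-finite measure ν on E_X with κ(y) ≪ ν for every y ∈ E_Y, and let G* be the smallest SDR σ-field for Y versus X (the central σ-field, which exists and is unique under this hypothesis). Let G be a sub-σ-field of σ(X) with Y ⊥⊥ X | G whose class of G-measurable functions is complete (every G-measurable f ∈ L²(μ) with μ[f|σ(Y)] = 0 μ-a.e. satisfies f = 0 μ-a.e.). Then for every f ∈ L²(μ): f is μ-a.e. equal to a G-measurable function if and only if f is μ-a.e. equal to a G*-measurable function. -/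
open MeasureTheory ProbabilityTheory

lemma memLp_two_condexp_aux {Ω : Type*} {m : MeasurableSpace Ω} [mΩ : MeasurableSpace Ω]
    {μ : Measure Ω} [IsProbabilityMeasure μ] (hm : m ≤ mΩ) {g : Ω → ℝ}
    (hg : MemLp g 2 μ) : MemLp (μ[g|m]) 2 μ := by
  have h : (condExpL2 ℝ ℝ hm (hg.toLp g) : Ω → ℝ) =ᵐ[μ] μ[g|m] := by
    refine ae_eq_condExp_of_forall_setIntegral_eq hm (hg.integrable one_le_two)
      (fun s hs hμs => integrableOn_condExpL2_of_measure_ne_top hm hμs.ne _)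
      (fun s hs hμs => ?_) (aestronglyMeasurable_condExpL2 hm _)
    rw [integral_condExpL2_eq hm (hg.toLp g) hs hμs.ne]
    exact integral_congr_ae (ae_restrict_of_ae hg.coeFn_toLp)
  refine (Lp.memLp ((condExpL2 ℝ ℝ hm (hg.toLp g) : Ω →₂[μ] ℝ))).ae_eq ?_
  exact h

lemma key_indicator {Ω : Type*} {mX mY Gs : MeasurableSpace Ω} [mΩ : MeasurableSpace Ω]
    {μ : Measure Ω} [IsProbabilityMeasure μ] (hmX : mX ≤ mΩ) (hmY : mY ≤ mΩ)
    (hGs : Gs ≤ mX) (hCI : CondIndepSigma mΩ μ mX mY Gs) {A B : Set Ω}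
    (hA : MeasurableSet[mX] A) (hB : MeasurableSet[mY] B) :
    ∫ x in B, A.indicator (fun _ => (1:ℝ)) x ∂μ
      = ∫ x in B, (μ[A.indicator (fun _ => (1:ℝ))|Gs]) x ∂μ := by
  have hGsΩ : Gs ≤ mΩ := hGs.trans hmX
  have hAΩ : MeasurableSet[mΩ] A := hmX A hA
  have hBΩ : MeasurableSet[mΩ] B := hmY B hB
  have hIB : Integrable (B.indicator (fun _ => (1:ℝ))) μ :=
    (integrable_const (1:ℝ) (μ := μ)).indicator hBΩ
  have hIAB : Integrable ((A ∩ B).indicator (fun _ => (1:ℝ))) μ :=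
    (integrable_const (1:ℝ) (μ := μ)).indicator (hAΩ.inter hBΩ)
  have hprod_eq : B.indicator (μ[A.indicator (fun _ => (1:ℝ))|Gs])
      = (μ[A.indicator (fun _ => (1:ℝ))|Gs]) * B.indicator (fun _ => (1:ℝ)) := by
    funext x
    by_cases hx : x ∈ B <;> simp [Set.indicator_of_mem, Set.indicator_of_notMem, hx]
  have hIprod : Integrable ((μ[A.indicator (fun _ => (1:ℝ))|Gs])
      * B.indicator (fun _ => (1:ℝ))) μ := by
    rw [← hprod_eq]; exact Integrable.indicator (μ := μ) integrable_condExp hBΩ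
  calc ∫ x in B, A.indicator (fun _ => (1:ℝ)) x ∂μ
      = ∫ x, (A ∩ B).indicator (fun _ => (1:ℝ)) x ∂μ := by
        rw [integral_indicator (μ := μ.restrict B) hAΩ, integral_indicator (μ := μ) (hAΩ.inter hBΩ),
          Measure.restrict_restrict (μ := μ) hAΩ]
    _ = ∫ x, (μ[(A ∩ B).indicator (fun _ => (1:ℝ))|Gs]) x ∂μ :=
        (integral_condExp hGsΩ).symm
    _ = ∫ x, ((μ[A.indicator (fun _ => (1:ℝ))|Gs]) x
          * (μ[B.indicator (fun _ => (1:ℝ))|Gs]) x) ∂μ :=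
        integral_congr_ae (hCI A hA B hB)
    _ = ∫ x, (μ[(μ[A.indicator (fun _ => (1:ℝ))|Gs])
          * B.indicator (fun _ => (1:ℝ))|Gs]) x ∂μ := by
        exact integral_congr_ae (condExp_mul_of_stronglyMeasurable_left stronglyMeasurable_condExp hIprod hIB).symm
    _ = ∫ x, ((μ[A.indicator (fun _ => (1:ℝ))|Gs])
          * B.indicator (fun _ => (1:ℝ))) x ∂μ := integral_condExp hGsΩ
    _ = ∫ x in B, (μ[A.indicator (fun _ => (1:ℝ))|Gs]) x ∂μ := by
        rw [← hprod_eq]; exact integral_indicator (μ := μ) hBΩ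

lemma key_integrable {Ω : Type*} {mX mY Gs Gm : MeasurableSpace Ω} [mΩ : MeasurableSpace Ω]
    {μ : Measure Ω} [IsProbabilityMeasure μ] (hmX : mX ≤ mΩ) (hmY : mY ≤ mΩ)
    (hGs : Gs ≤ mX) (hCI : CondIndepSigma mΩ μ mX mY Gs) (hGm : Gm ≤ mX)
    {B : Set Ω} (hB : MeasurableSet[mY] B) :
    ∀ ⦃g : Ω → ℝ⦄, Integrable g (μ.trim (hGm.trans hmX)) →
      ∫ x in B, g x ∂μ = ∫ x in B, (μ[g|Gs]) x ∂μ := by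
  have hGmΩ : Gm ≤ mΩ := hGm.trans hmX
  have hGsΩ : Gs ≤ mΩ := hGs.trans hmX
  have hBΩ : MeasurableSet[mΩ] B := hmY B hB
  refine @Integrable.induction Ω ℝ Gm _ (μ.trim hGmΩ)
    (fun g => ∫ x in B, g x ∂μ = ∫ x in B, (μ[g|Gs]) x ∂μ) ?_ ?_ ?_ ?_
  · -- indicators
    intro c s hs _
    have hsX : MeasurableSet[mX] s := hGm s hs
    have hind : s.indicator (fun _ => c) = c • s.indicator (fun _ => (1:ℝ)) := by
      funext x
      by_cases hx : x ∈ s <;>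
        simp [Set.indicator_of_mem, Set.indicator_of_notMem, hx]
    rw [hind]
    have h1 := key_indicator hmX hmY hGs hCI hsX hB
    have hsmul : μ[c • s.indicator (fun _ => (1:ℝ))|Gs]
        =ᵐ[μ] c • μ[s.indicator (fun _ => (1:ℝ))|Gs] := condExp_smul c _ _
    calc ∫ x in B, (c • s.indicator (fun _ => (1:ℝ))) x ∂μ
        = c * ∫ x in B, s.indicator (fun _ => (1:ℝ)) x ∂μ := by
          simp_rw [Pi.smul_apply, smul_eq_mul]
          exact integral_const_mul c _
      _ = c * ∫ x in B, (μ[s.indicator (fun _ => (1:ℝ))|Gs]) x ∂μ := by rw [h1]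
      _ = ∫ x in B, (c • μ[s.indicator (fun _ => (1:ℝ))|Gs]) x ∂μ := by
          simp_rw [Pi.smul_apply, smul_eq_mul]
          exact (integral_const_mul c _).symm
      _ = ∫ x in B, (μ[c • s.indicator (fun _ => (1:ℝ))|Gs]) x ∂μ :=
          (setIntegral_congr_ae hBΩ (hsmul.mono fun x hx _ => hx.symm))
  · -- additivity
    intro f g _ hf hg hPf hPg
    have hfμ : Integrable f μ := integrable_of_integrable_trim hGmΩ hf
    have hgμ : Integrable g μ := integrable_of_integrable_trim hGmΩ hg
    have hadd : μ[f + g|Gs] =ᵐ[μ] μ[f|Gs] + μ[g|Gs] := condExp_add hfμ hgμ Gs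
    calc ∫ x in B, (f + g) x ∂μ
        = ∫ x in B, f x ∂μ + ∫ x in B, g x ∂μ :=
          integral_add hfμ.integrableOn hgμ.integrableOn
      _ = ∫ x in B, (μ[f|Gs]) x ∂μ + ∫ x in B, (μ[g|Gs]) x ∂μ := by rw [hPf, hPg]
      _ = ∫ x in B, (μ[f|Gs] + μ[g|Gs]) x ∂μ :=
          (integral_add integrable_condExp.integrableOn
            integrable_condExp.integrableOn).symm
      _ = ∫ x in B, (μ[f + g|Gs]) x ∂μ :=
          setIntegral_congr_ae hBΩ (hadd.mono fun x hx _ => hx.symm)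
  · -- closedness in L¹(trim)
    have hL : LipschitzWith 1 (fun f : Lp ℝ 1 (μ.trim hGmΩ) => ∫ x in B, f x ∂μ) := by
      refine LipschitzWith.of_dist_le_mul fun f g => ?_
      have hfμ : Integrable f μ := integrable_of_integrable_trim hGmΩ (L1.integrable_coeFn f)
      have hgμ : Integrable g μ := integrable_of_integrable_trim hGmΩ (L1.integrable_coeFn g)
      have h1 : dist (∫ x in B, f x ∂μ) (∫ x in B, g x ∂μ)
          = |∫ x in B, (f x - g x) ∂μ| := by
        rw [Real.dist_eq, ← integral_sub hfμ.integrableOn hgμ.integrableOn]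
      rw [h1, NNReal.coe_one, one_mul]
      have h2 : |∫ x in B, (f x - g x) ∂μ| ≤ ∫ x in B, |f x - g x| ∂μ := by
        simpa [Real.norm_eq_abs] using
          norm_integral_le_integral_norm (μ := μ.restrict B) (fun x => f x - g x)
      refine h2.trans ?_
      have h3 : ∫ x in B, |f x - g x| ∂μ ≤ ∫ x, |f x - g x| ∂μ := by
        refine setIntegral_le_integral (hfμ.sub hgμ).abs ?_
        exact Filter.Eventually.of_forall fun x => abs_nonneg _
      refine h3.trans ?_
      have h4 : ∫ x, |f x - g x| ∂μ = ∫ x, |f x - g x| ∂(μ.trim hGmΩ) := by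
        refine integral_trim_ae hGmΩ ?_
        exact ((Lp.aestronglyMeasurable f).sub (Lp.aestronglyMeasurable g)).norm
      rw [h4]
      have h5 : dist f g = ∫ x, ‖(f - g : Lp ℝ 1 (μ.trim hGmΩ)) x‖ ∂(μ.trim hGmΩ) := by
        rw [dist_eq_norm, L1.norm_eq_integral_norm]
      rw [h5]
      refine le_of_eq (integral_congr_ae ?_)
      filter_upwards [Lp.coeFn_sub f g] with x hx
      rw [Real.norm_eq_abs, hx, Pi.sub_apply]
    have hR : LipschitzWith 1 (fun f : Lp ℝ 1 (μ.trim hGmΩ) => ∫ x in B, (μ[⇑f|Gs]) x ∂μ) := by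
      refine LipschitzWith.of_dist_le_mul fun f g => ?_
      have hfμ : Integrable f μ := integrable_of_integrable_trim hGmΩ (L1.integrable_coeFn f)
      have hgμ : Integrable g μ := integrable_of_integrable_trim hGmΩ (L1.integrable_coeFn g)
      have hsub : μ[⇑f - ⇑g|Gs] =ᵐ[μ] μ[⇑f|Gs] - μ[⇑g|Gs] := condExp_sub hfμ hgμ Gs
      have h1 : dist (∫ x in B, (μ[⇑f|Gs]) x ∂μ) (∫ x in B, (μ[⇑g|Gs]) x ∂μ)
          = |∫ x in B, (μ[⇑f - ⇑g|Gs]) x ∂μ| := by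
        rw [Real.dist_eq, ← integral_sub integrable_condExp.integrableOn
          integrable_condExp.integrableOn]
        congr 1
        refine setIntegral_congr_ae hBΩ (hsub.mono fun x hx _ => ?_)
        rw [hx, Pi.sub_apply]
      rw [h1, NNReal.coe_one, one_mul]
      have h2 : |∫ x in B, (μ[⇑f - ⇑g|Gs]) x ∂μ| ≤ ∫ x in B, |(μ[⇑f - ⇑g|Gs]) x| ∂μ := by
        simpa [Real.norm_eq_abs] using
          norm_integral_le_integral_norm (μ := μ.restrict B) (μ[⇑f - ⇑g|Gs])
      refine h2.trans ?_
      have h3 : ∫ x in B, |(μ[⇑f - ⇑g|Gs]) x| ∂μ ≤ ∫ x, |(μ[⇑f - ⇑g|Gs]) x| ∂μ := by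
        refine setIntegral_le_integral integrable_condExp.abs ?_
        exact Filter.Eventually.of_forall fun x => abs_nonneg _
      refine h3.trans ?_
      refine (integral_abs_condExp_le _).trans ?_
      simp_rw [Pi.sub_apply]
      have h4 : ∫ x, |f x - g x| ∂μ = ∫ x, |f x - g x| ∂(μ.trim hGmΩ) := by
        refine integral_trim_ae hGmΩ ?_
        exact ((Lp.aestronglyMeasurable f).sub (Lp.aestronglyMeasurable g)).norm
      rw [h4]
      have h5 : dist f g = ∫ x, ‖(f - g : Lp ℝ 1 (μ.trim hGmΩ)) x‖ ∂(μ.trim hGmΩ) := by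
        rw [dist_eq_norm, L1.norm_eq_integral_norm]
      rw [h5]
      refine le_of_eq (integral_congr_ae ?_)
      filter_upwards [Lp.coeFn_sub f g] with x hx
      rw [Real.norm_eq_abs, hx, Pi.sub_apply]
    exact isClosed_eq hL.continuous hR.continuous
  · -- a.e. invariance
    intro f g hfg hf hPf
    have hfgμ : f =ᵐ[μ] g := ae_eq_of_ae_eq_trim hfg
    have h1 : ∫ x in B, f x ∂μ = ∫ x in B, g x ∂μ :=
      setIntegral_congr_ae hBΩ (hfgμ.mono fun x hx _ => hx)
    have h2 : μ[f|Gs] =ᵐ[μ] μ[g|Gs] := condExp_congr_ae hfgμ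
    rw [← h1, hPf]
    exact setIntegral_congr_ae hBΩ (h2.mono fun x hx _ => hx)

/-- Theorem 4: if a complete and sufficient dimension reduction class exists, it coincides
(a.e.) with the central class: a square-integrable `f` is a.e. equal to a `G`-measurable
function iff it is a.e. equal to a `G*`-measurable function, where `G*` is the central
σ-field. -/
theorem complete_sufficient_class_eq_central_class
    {Ω EX EY : Type*} [mΩ : MeasurableSpace Ω] [mEX : MeasurableSpace EX]
    [mEY : MeasurableSpace EY]
    (μ : Measure Ω) [IsProbabilityMeasure μ]
    (X : Ω → EX) (Y : Ω → EY) (hX : Measurable X) (hY : Measurable Y)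
    (κ : Kernel EY EX) [IsMarkovKernel κ]
    (hκ : ∀ A : Set EX, MeasurableSet A → ∀ B : Set EY, MeasurableSet B →
      μ (X ⁻¹' A ∩ Y ⁻¹' B) = ∫⁻ y in B, κ y A ∂(μ.map Y))
    (ν : Measure EX) [SigmaFinite ν] (hdom : ∀ y : EY, κ y ≪ ν)
    -- G* is the smallest SDR σ-field (the central σ-field):
    (Gstar : MeasurableSpace Ω) (hGstar : Gstar ≤ MeasurableSpace.comap X mEX)
    (hCIstar : CondIndepSigma mΩ μ (MeasurableSpace.comap X mEX)
      (MeasurableSpace.comap Y mEY) Gstar)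
    (hmin : ∀ G' : MeasurableSpace Ω, G' ≤ MeasurableSpace.comap X mEX →
      CondIndepSigma mΩ μ (MeasurableSpace.comap X mEX) (MeasurableSpace.comap Y mEY) G' →
      Gstar ≤ G')
    -- G is a sufficient σ-field whose class is complete:
    (G : MeasurableSpace Ω) (hG : G ≤ MeasurableSpace.comap X mEX)
    (hCI : CondIndepSigma mΩ μ (MeasurableSpace.comap X mEX) (MeasurableSpace.comap Y mEY) G)
    (hcomplete : ∀ f : Ω → ℝ, Measurable[G] f → MemLp f 2 μ →
      (μ[f|MeasurableSpace.comap Y mEY] =ᵐ[μ] 0) → f =ᵐ[μ] 0)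
    (f : Ω → ℝ) (hf2 : MemLp f 2 μ) :
    (∃ g : Ω → ℝ, Measurable[G] g ∧ f =ᵐ[μ] g) ↔
      (∃ g : Ω → ℝ, Measurable[Gstar] g ∧ f =ᵐ[μ] g) := by
  letI : MeasurableSpace Ω := mΩ
  have hmX : MeasurableSpace.comap X mEX ≤ mΩ := hX.comap_le
  have hmY : MeasurableSpace.comap Y mEY ≤ mΩ := hY.comap_le
  have hGsG : Gstar ≤ G := hmin G hG hCI
  constructor
  · rintro ⟨g, hgm, hfg⟩
    have hg2 : MemLp g 2 μ := hf2.ae_eq hfg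
    have hgi : Integrable g μ := hg2.integrable one_le_two
    have hcond2 : MemLp (μ[g|Gstar]) 2 μ := memLp_two_condexp_aux (mΩ := mΩ) (hGstar.trans hmX) hg2
    have he2 : MemLp (fun ω => g ω - (μ[g|Gstar]) ω) 2 μ := hg2.sub hcond2
    have hemeas : Measurable[G] (fun ω => g ω - (μ[g|Gstar]) ω) :=
      hgm.sub ((stronglyMeasurable_condExp.measurable).mono hGsG le_rfl)
    have hecond : μ[(fun ω => g ω - (μ[g|Gstar]) ω)|MeasurableSpace.comap Y mEY] =ᵐ[μ] 0 := by
      refine (ae_eq_condExp_of_forall_setIntegral_eq (μ := μ) hmY (he2.integrable one_le_two)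
        (fun s _ _ => integrableOn_zero (μ := μ)) (fun s hs hμs => ?_) ?_).symm
      · have hkey := key_integrable hmX hmY hGstar hCIstar hG hs
          (hgi.trim (hG.trans hmX) hgm.stronglyMeasurable)
        have hsub : ∫ x in s, (g x - (μ[g|Gstar]) x) ∂μ
            = ∫ x in s, g x ∂μ - ∫ x in s, (μ[g|Gstar]) x ∂μ :=
          integral_sub (hgi.integrableOn (s := s)) (Integrable.integrableOn (μ := μ) (s := s) integrable_condExp)
        rw [integral_zero, hsub, hkey, sub_self]
      · exact StronglyMeasurable.aestronglyMeasurable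
          (stronglyMeasurable_const (b := (0:ℝ)))
    have he0 : (fun ω => g ω - (μ[g|Gstar]) ω) =ᵐ[μ] 0 := hcomplete _ hemeas he2 hecond
    refine ⟨μ[g|Gstar], stronglyMeasurable_condExp.measurable, hfg.trans ?_⟩
    filter_upwards [he0] with ω hω
    have : g ω - (μ[g|Gstar]) ω = 0 := hω
    linarith
  · rintro ⟨g, hgm, hfg⟩
    exact ⟨g, hgm.mono hGsG le_rfl, hfg⟩
end

section
/- Let G be a sub-σ-field of σ(X) with Y ⊥⊥ X | G, and let f : Ω → ℝ be a σ(X)-measurable function in L²(μ). Suppose there exist constants c, v ∈ ℝ such that μ[f|G] = c μ-a.e. and μ[f²|G] − (μ[f|G])² = v μ-a.e. Then μ[f|σ(Y)] = ∫ f dμ μ-a.e., and μ[f²|σ(Y)] − (μ[f|σ(Y)])² = ∫ f² dμ − (∫ f dμ)² μ-a.e.; that is, the conditional variance of f given σ(Y) is almost surely equal to the unconditional variance of f. -/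
open MeasureTheory ProbabilityTheory

/-- Key lemma: if `Y ⊥⊥ X | G`, `g` is `mX`-measurable and integrable with
`μ[g|G]` a.e. equal to a constant `k`, then `μ[g|mY]` is a.e. equal to `k`. -/
lemma key_condexp_eq_const
    {Ω : Type*} [mΩ : MeasurableSpace Ω] (μ : Measure Ω) [IsProbabilityMeasure μ]
    {mX mY G : MeasurableSpace Ω} (hXle : mX ≤ mΩ) (hYle : mY ≤ mΩ) (hG : G ≤ mX)
    (hCI : CondIndepSigma mΩ μ mX mY G)
    {g : Ω → ℝ} (hgm : StronglyMeasurable[mX] g) (hgi : Integrable g μ)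
    {k : ℝ} (hk : μ[g|G] =ᵐ[μ] fun _ => k) :
    μ[g|mY] =ᵐ[μ] fun _ => k := by
  letI : MeasurableSpace Ω := mΩ
  have hGle : G ≤ mΩ := hG.trans hXle
  have hind_int : ∀ B : Set Ω, MeasurableSet[mΩ] B →
      Integrable (B.indicator (fun _ => (1:ℝ))) μ :=
    fun B hB => (integrable_const (1:ℝ)).indicator hB
  -- a.e. bound for conditional expectations of indicators
  have hbdd : ∀ B : Set Ω, MeasurableSet[mΩ] B →
      ∀ᵐ ω ∂μ, ‖(μ[B.indicator (fun _ => (1:ℝ))|G]) ω‖ ≤ 1 := by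
    intro B hB
    have h0 : (0 : Ω → ℝ) ≤ᵐ[μ] μ[B.indicator (fun _ => (1:ℝ))|G] :=
      condExp_nonneg (Filter.Eventually.of_forall fun ω => by
        by_cases h : ω ∈ B <;> simp [h])
    have h1 : μ[B.indicator (fun _ => (1:ℝ))|G] ≤ᵐ[μ] μ[(fun _ => (1:ℝ))|G] :=
      condExp_mono (hind_int B hB) (integrable_const 1)
        (Filter.Eventually.of_forall fun ω => by
          by_cases h : ω ∈ B <;> simp [h])
    rw [condExp_const hGle] at h1
    filter_upwards [h0, h1] with ω hω0 hω1
    have hω0' : (0:ℝ) ≤ (μ[B.indicator (fun _ => (1:ℝ))|G]) ω := hω0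
    rw [Real.norm_eq_abs, abs_le]
    exact ⟨by linarith, hω1⟩
  -- main computation: for every `B ∈ mY`, `∫_B g = k * μ(B)`
  have hmain : ∀ B : Set Ω, MeasurableSet[mY] B →
      ∫ ω in B, g ω ∂μ = k * (μ B).toReal := by
    intro B hBY
    have hB : MeasurableSet[mΩ] B := hYle B hBY
    set h : Ω → ℝ := μ[B.indicator (fun _ => (1:ℝ))|G] with hh
    have hhm : StronglyMeasurable[G] h := stronglyMeasurable_condExp
    have hhi : Integrable h μ := integrable_condExp
    -- Step A : for A ∈ mX, ∫ 1_A * h = μ(A ∩ B)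
    have stepA : ∀ A : Set Ω, MeasurableSet[mX] A →
        ∫ ω, h ω * A.indicator (fun _ => (1:ℝ)) ω ∂μ = (μ (A ∩ B)).toReal := by
      intro A hAX
      have hA : MeasurableSet[mΩ] A := hXle A hAX
      have hint : Integrable (fun ω => h ω * A.indicator (fun _ => (1:ℝ)) ω) μ :=
        (hind_int A hA).bdd_mul hhi.aestronglyMeasurable (hbdd B hB)
      have hpull : μ[(fun ω => h ω * A.indicator (fun _ => (1:ℝ)) ω)|G]
          =ᵐ[μ] fun ω => h ω * (μ[A.indicator (fun _ => (1:ℝ))|G]) ω :=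
        condExp_mul_of_stronglyMeasurable_left hhm hint (hind_int A hA)
      calc ∫ ω, h ω * A.indicator (fun _ => (1:ℝ)) ω ∂μ
          = ∫ ω, (μ[(fun ω => h ω * A.indicator (fun _ => (1:ℝ)) ω)|G]) ω ∂μ :=
            (integral_condExp hGle).symm
        _ = ∫ ω, (μ[(A ∩ B).indicator (fun _ => (1:ℝ))|G]) ω ∂μ := by
            refine integral_congr_ae ?_
            filter_upwards [hpull, hCI A hAX B hBY] with ω h1 h2
            rw [h1, h2]; ring
        _ = ∫ ω, (A ∩ B).indicator (fun _ => (1:ℝ)) ω ∂μ := integral_condExp hGle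
        _ = (μ (A ∩ B)).toReal := by
            rw [integral_indicator (hA.inter hB)]
            simp
            rfl
    -- Step B : μ[1_B - h | mX] = 0 a.e.
    have hρi : Integrable (fun ω => B.indicator (fun _ => (1:ℝ)) ω - h ω) μ :=
      (hind_int B hB).sub hhi
    have stepB : (fun _ => (0:ℝ)) =ᵐ[μ]
        μ[(fun ω => B.indicator (fun _ => (1:ℝ)) ω - h ω)|mX] := by
      refine ae_eq_condExp_of_forall_setIntegral_eq hXle hρi
        (fun s _ _ => (integrableOn_const_iff).mpr (Or.inr (measure_lt_top _ _)))
        (fun s hsX _ => ?_)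
        (StronglyMeasurable.aestronglyMeasurable
          (@stronglyMeasurable_const Ω ℝ mX _ 0))
      have hs : MeasurableSet[mΩ] s := hXle s hsX
      have e1 : ∫ ω in s, B.indicator (fun _ => (1:ℝ)) ω ∂μ = (μ (s ∩ B)).toReal := by
        rw [setIntegral_indicator hB]
        simp
        rfl
      have e2 : ∫ ω in s, h ω ∂μ = (μ (s ∩ B)).toReal := by
        rw [← stepA s hsX, ← integral_indicator hs]
        refine integral_congr_ae (Filter.Eventually.of_forall fun ω => ?_)
        by_cases hx : ω ∈ s <;> simp [hx]
      have e3 : ∫ ω in s, (B.indicator (fun _ => (1:ℝ)) ω - h ω) ∂μ = 0 := by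
        rw [integral_sub ((hind_int B hB).integrableOn) (hhi.integrableOn), e1, e2]
        ring
      simpa using e3.symm
    -- Step C : ∫ g * (1_B - h) = 0
    have hgρi : Integrable (fun ω => g ω * (B.indicator (fun _ => (1:ℝ)) ω - h ω)) μ := by
      have hb : ∀ᵐ ω ∂μ, ‖B.indicator (fun _ => (1:ℝ)) ω - h ω‖ ≤ 2 := by
        filter_upwards [hbdd B hB] with ω hω
        have h2 : ‖B.indicator (fun _ => (1:ℝ)) ω‖ ≤ 1 := by
          by_cases hx : ω ∈ B <;> simp [hx]
        calc ‖B.indicator (fun _ => (1:ℝ)) ω - h ω‖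
            ≤ ‖B.indicator (fun _ => (1:ℝ)) ω‖ + ‖h ω‖ := norm_sub_le _ _
          _ ≤ 2 := by linarith
      have := hgi.bdd_mul hρi.aestronglyMeasurable hb
      exact this.congr (Filter.Eventually.of_forall fun ω => by ring_nf)
    have stepC : ∫ ω, g ω * (B.indicator (fun _ => (1:ℝ)) ω - h ω) ∂μ = 0 := by
      have hpull : μ[(fun ω => g ω * (B.indicator (fun _ => (1:ℝ)) ω - h ω))|mX]
          =ᵐ[μ] fun ω => g ω *
            (μ[(fun ω => B.indicator (fun _ => (1:ℝ)) ω - h ω)|mX]) ω :=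
        condExp_mul_of_stronglyMeasurable_left hgm hgρi hρi
      calc ∫ ω, g ω * (B.indicator (fun _ => (1:ℝ)) ω - h ω) ∂μ
          = ∫ ω, (μ[(fun ω => g ω * (B.indicator (fun _ => (1:ℝ)) ω - h ω))|mX]) ω ∂μ :=
            (integral_condExp hXle).symm
        _ = ∫ ω, (0:ℝ) ∂μ := by
            refine integral_congr_ae ?_
            filter_upwards [hpull, stepB] with ω h1 h2
            rw [h1, ← h2]
            simp
        _ = 0 := integral_zero _ _
    -- Step D : ∫ h * g = k * μ(B)
    have hghi : Integrable (fun ω => h ω * g ω) μ :=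
      hgi.bdd_mul hhi.aestronglyMeasurable (hbdd B hB)
    have stepD : ∫ ω, h ω * g ω ∂μ = k * (μ B).toReal := by
      have hpull : μ[(fun ω => h ω * g ω)|G] =ᵐ[μ] fun ω => h ω * (μ[g|G]) ω :=
        condExp_mul_of_stronglyMeasurable_left hhm hghi hgi
      have hB1 : ∫ ω, h ω ∂μ = (μ B).toReal := by
        rw [hh, integral_condExp hGle, integral_indicator hB]
        simp
        rfl
      calc ∫ ω, h ω * g ω ∂μ
          = ∫ ω, (μ[(fun ω => h ω * g ω)|G]) ω ∂μ := (integral_condExp hGle).symm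
        _ = ∫ ω, k * h ω ∂μ := by
            refine integral_congr_ae ?_
            filter_upwards [hpull, hk] with ω h1 h2
            rw [h1, h2]; ring
        _ = k * ∫ ω, h ω ∂μ := integral_const_mul _ _
        _ = k * (μ B).toReal := by rw [hB1]
    -- combine
    calc ∫ ω in B, g ω ∂μ
        = ∫ ω, B.indicator g ω ∂μ := (integral_indicator hB).symm
      _ = ∫ ω, (h ω * g ω + g ω * (B.indicator (fun _ => (1:ℝ)) ω - h ω)) ∂μ := by
          refine integral_congr_ae (Filter.Eventually.of_forall fun ω => ?_)
          by_cases hx : ω ∈ B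
          · simp [hx]; ring
          · simp [hx]; ring
      _ = (∫ ω, h ω * g ω ∂μ) + ∫ ω, g ω * (B.indicator (fun _ => (1:ℝ)) ω - h ω) ∂μ :=
          integral_add hghi hgρi
      _ = k * (μ B).toReal := by rw [stepD, stepC]; ring
  -- conclude via the characterization of conditional expectation
  refine (ae_eq_condExp_of_forall_setIntegral_eq hYle hgi
    (fun s _ _ => (integrableOn_const_iff).mpr (Or.inr (measure_lt_top _ _)))
    (fun s hs _ => ?_)
    (StronglyMeasurable.aestronglyMeasurable
      (@stronglyMeasurable_const Ω ℝ mY _ k))).symm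
  rw [hmain s hs, setIntegral_const, smul_eq_mul]
  exact mul_comm _ _

/-- The key step of Theorem 7 (GSAVE unbiasedness): if `Y ⊥⊥ X | G` and the
`σ(X)`-measurable square-integrable `f` has constant conditional mean and constant
conditional variance given `G`, then its conditional mean given `σ(Y)` is the
unconditional mean and its conditional variance given `σ(Y)` is the unconditional
variance, a.e. -/
theorem cond_var_given_Y_eq_var
    {Ω EX EY : Type*} [mΩ : MeasurableSpace Ω] [mEX : MeasurableSpace EX]
    [mEY : MeasurableSpace EY]
    (μ : Measure Ω) [IsProbabilityMeasure μ]
    (X : Ω → EX) (Y : Ω → EY) (hX : Measurable X) (hY : Measurable Y)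
    (G : MeasurableSpace Ω) (hG : G ≤ MeasurableSpace.comap X mEX)
    (hCI : CondIndepSigma mΩ μ (MeasurableSpace.comap X mEX) (MeasurableSpace.comap Y mEY) G)
    (f : Ω → ℝ) (hf : Measurable[MeasurableSpace.comap X mEX] f) (hf2 : MemLp f 2 μ)
    (c v : ℝ)
    (hmean : μ[f|G] =ᵐ[μ] fun _ => c)
    (hvar : (fun ω => (μ[fun ω' => (f ω') ^ 2|G]) ω - ((μ[f|G]) ω) ^ 2)
      =ᵐ[μ] fun _ => v) :
    (μ[f|MeasurableSpace.comap Y mEY] =ᵐ[μ] fun _ => ∫ ω, f ω ∂μ) ∧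
    ((fun ω => (μ[fun ω' => (f ω') ^ 2|MeasurableSpace.comap Y mEY]) ω
        - ((μ[f|MeasurableSpace.comap Y mEY]) ω) ^ 2)
      =ᵐ[μ] fun _ => ∫ ω, (f ω) ^ 2 ∂μ - (∫ ω, f ω ∂μ) ^ 2) := by
  letI : MeasurableSpace Ω := mΩ
  have hXle : MeasurableSpace.comap X mEX ≤ mΩ := hX.comap_le
  have hYle : MeasurableSpace.comap Y mEY ≤ mΩ := hY.comap_le
  have hGle : G ≤ mΩ := hG.trans hXle
  have hfi : Integrable f μ := hf2.integrable one_le_two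
  have hf2i : Integrable (fun ω => f ω ^ 2) μ := hf2.integrable_sq
  -- the conditional second moment is the constant `v + c ^ 2`
  have hsec : μ[(fun ω' => (f ω') ^ 2)|G] =ᵐ[μ] fun _ => v + c ^ 2 := by
    filter_upwards [hvar, hmean] with ω h1 h2
    have h1' : (μ[fun ω' => (f ω') ^ 2|G]) ω - ((μ[f|G]) ω) ^ 2 = v := h1
    have h2' : (μ[f|G]) ω = c := h2
    show (μ[fun ω' => (f ω') ^ 2|G]) ω = v + c ^ 2
    rw [h2'] at h1'
    linarith
  -- unconditional moments
  have hc : ∫ ω, f ω ∂μ = c := by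
    have h := integral_condExp hGle (f := f) (μ := μ)
    rw [integral_congr_ae hmean] at h
    simpa using h.symm
  have hv : ∫ ω, (f ω) ^ 2 ∂μ = v + c ^ 2 := by
    have h := integral_condExp hGle (f := fun ω => (f ω) ^ 2) (μ := μ)
    rw [integral_congr_ae hsec] at h
    simpa using h.symm
  have res1 : μ[f|MeasurableSpace.comap Y mEY] =ᵐ[μ] fun _ => c :=
    key_condexp_eq_const μ hXle hYle hG hCI hf.stronglyMeasurable hfi hmean
  have res2 : μ[(fun ω' => (f ω') ^ 2)|MeasurableSpace.comap Y mEY]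
      =ᵐ[μ] fun _ => v + c ^ 2 :=
    key_condexp_eq_const μ hXle hYle hG hCI
      ((hf.pow_const 2).stronglyMeasurable) hf2i hsec
  constructor
  · filter_upwards [res1] with ω h1
    have h1' : (μ[f|MeasurableSpace.comap Y mEY]) ω = c := h1
    show (μ[f|MeasurableSpace.comap Y mEY]) ω = ∫ ω, f ω ∂μ
    rw [h1', hc]
  · filter_upwards [res1, res2] with ω h1 h2
    have h1' : (μ[f|MeasurableSpace.comap Y mEY]) ω = c := h1
    have h2' : (μ[fun ω' => (f ω') ^ 2|MeasurableSpace.comap Y mEY]) ω = v + c ^ 2 := h2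
    show (μ[fun ω' => (f ω') ^ 2|MeasurableSpace.comap Y mEY]) ω
        - ((μ[f|MeasurableSpace.comap Y mEY]) ω) ^ 2
      = ∫ ω, (f ω) ^ 2 ∂μ - (∫ ω, f ω ∂μ) ^ 2
    rw [h1', h2', hc, hv]
end
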